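/- Let T > 0, let w be a complex number with Re w ≥ δ|w| for some δ > 0, |1 + e^{-Tw}| ≥ c₀ > 0, and define K(t,s) as the anti-periodic kernel K(t,s) = (e^{-w(t-s)} - e^{-w(T-t+s)})/(2w(1+e^{-Tw})) for s ≤ t and K(t,s) = (e^{-w(s-t)} - e^{-w(T+t-s)})/(2w(1+e^{-Tw})) for t ≤ s. Then there is a constant C = C(δ, c₀) (independent of T and w) such that sup_{t∈[0,T]} ∫₀ᵀ |K(t,s)| ds ≤ C/|w|². -/

import Mathlib

open Complex intervalIntegral

/-- The anti-periodic Green kernel `K_w(t,s)` on `[0,T]`. -/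
noncomputable def K (T : ℝ) (w : ℂ) (t s : ℝ) : ℂ :=
  if s ≤ t then
    (Complex.exp (-w * ((t : ℂ) - s)) - Complex.exp (-w * ((T : ℂ) - t + s))) /
      (2 * w * (1 + Complex.exp (-(T : ℂ) * w)))
  else
    (Complex.exp (-w * ((s : ℂ) - t)) - Complex.exp (-w * ((T : ℂ) + t - s))) /
      (2 * w * (1 + Complex.exp (-(T : ℂ) * w)))

lemma integral_exp_linear (a b u v : ℝ) (ha : a ≠ 0) :
    ∫ s in u..v, Real.exp (a * s + b) =
      (Real.exp (a * v + b) - Real.exp (a * u + b)) / a := by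
  have h : ∀ x ∈ Set.uIcc u v,
      HasDerivAt (fun s => Real.exp (a * s + b) / a) (Real.exp (a * x + b)) x := by
    intro x _
    have h1 : HasDerivAt (fun s : ℝ => a * s + b) a x := by
      simpa using ((hasDerivAt_id x).const_mul a).add_const b
    have h2 := (Real.hasDerivAt_exp (a * x + b)).comp x h1
    have h3 := h2.div_const a
    simpa [mul_comm, mul_div_assoc, mul_div_cancel_left₀ _ ha] using h3
  rw [intervalIntegral.integral_eq_sub_of_hasDerivAt h
    (by apply Continuous.intervalIntegrable; continuity)]
  ring

lemma exp_int_le (a b u v : ℝ) (ha : 0 < a) (huv : u ≤ v) (hb : a * v + b ≤ 0) :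
    ∫ s in u..v, Real.exp (a * s + b) ≤ 1 / a := by
  rw [integral_exp_linear a b u v ha.ne']
  have h1 : Real.exp (a * v + b) ≤ 1 := Real.exp_le_one_iff.2 hb
  have h2 : 0 < Real.exp (a * u + b) := Real.exp_pos _
  gcongr
  linarith

lemma exp_int_le' (a b u v : ℝ) (ha : 0 < a) (huv : u ≤ v) (hb : -(a * u) + b ≤ 0) :
    ∫ s in u..v, Real.exp (-(a * s) + b) ≤ 1 / a := by
  have h : (∫ s in u..v, Real.exp (-(a * s) + b))
      = ∫ s in -v..-u, Real.exp (a * s + b) := by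
    rw [← intervalIntegral.integral_comp_neg (fun s => Real.exp (a * s + b))]
    congr 1
    ext x
    ring_nf
  rw [h]
  exact exp_int_le a b (-v) (-u) ha (by linarith) (by linarith)

lemma abs_exp_le (w : ℂ) (a r : ℝ) (ha : a ≤ w.re) (hr : 0 ≤ r) :
    ‖Complex.exp (-w * (r : ℂ))‖ ≤ Real.exp (-(a * r)) := by
  rw [Complex.norm_exp]
  apply Real.exp_le_exp.2
  have : (-w * (r : ℂ)).re = -(w.re * r) := by
    simp [Complex.mul_re]
  rw [this]
  nlinarith

lemma contK (T : ℝ) (w : ℂ) (t : ℝ) : Continuous (fun s => K T w t s) := by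
  unfold K
  apply Continuous.if_le
  · fun_prop
  · fun_prop
  · exact continuous_id
  · exact continuous_const
  · intro s hs
    subst hs
    ring_nf

/-- Uniform kernel estimate: for `Re w ≥ δ|w|`, `|1 + e^{-Tw}| ≥ c₀`, there is a
constant `C = C(δ, c₀)` independent of `T` and `w` with
`sup_{t ∈ [0,T]} ∫₀ᵀ |K(t,s)| ds ≤ C/|w|²`. -/
theorem stmt_4 (δ c₀ : ℝ) (hδ : 0 < δ) (hc₀ : 0 < c₀) :
    ∃ C : ℝ, 0 < C ∧ ∀ (T : ℝ), 0 < T → ∀ w : ℂ,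
      δ * ‖w‖ ≤ w.re → c₀ ≤ ‖1 + Complex.exp (-(T : ℂ) * w)‖ →
      ∀ t ∈ Set.Icc (0 : ℝ) T,
        (∫ s in (0 : ℝ)..T, ‖K T w t s‖) ≤ C / (‖w‖) ^ 2 := by
  refine ⟨2 / (δ * c₀), by positivity, ?_⟩
  intro T hT w hre hcw t ht
  obtain ⟨ht0, htT⟩ := ht
  by_cases hw : w = 0
  · subst hw
    simp [K]
  have hwa : 0 < ‖w‖ := by
    simpa [norm_pos_iff] using hw
  set a : ℝ := δ * ‖w‖ with ha_def
  have ha : 0 < a := by positivity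
  -- value of |1 + exp(-T w)|
  set E : ℂ := 1 + Complex.exp (-(T : ℂ) * w) with hE
  have hEpos : 0 < ‖E‖ := lt_of_lt_of_le hc₀ hcw
  have hden : 2 * ‖w‖ * c₀ ≤ ‖2 * w * E‖ := by
    rw [norm_mul, norm_mul]
    simp only [Complex.norm_two]
    gcongr
  have hdenpos : (0:ℝ) < 2 * ‖w‖ * c₀ := by positivity
  -- pointwise bounds on each piece
  have hcont : Continuous (fun s => ‖K T w t s‖) :=
    (continuous_norm).comp (contK T w t)
  have hInt : ∀ u v : ℝ, IntervalIntegrable (fun s => ‖K T w t s‖)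
      MeasureTheory.volume u v := fun u v => hcont.intervalIntegrable u v
  have habs : ∀ r : ℝ, 0 ≤ r →
      ‖Complex.exp (-w * (r : ℂ))‖ ≤ Real.exp (-(a * r)) :=
    fun r hr => abs_exp_le w a r hre hr
  -- bound on [0, t]
  have bound1 : (∫ s in (0:ℝ)..t, ‖K T w t s‖) ≤
      (1 / a + 1 / a) / (2 * ‖w‖ * c₀) := by
    have hmono : ∀ s ∈ Set.Icc (0:ℝ) t, ‖K T w t s‖ ≤
        (Real.exp (a * s + -(a * t)) + Real.exp (-(a * s) + (a * t - a * T)))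
          / (2 * ‖w‖ * c₀) := by
      intro s hs
      obtain ⟨hs0, hst⟩ := hs
      rw [K, if_pos hst, norm_div]
      apply div_le_div₀ (by positivity) _ hdenpos hden
      have e1 : ‖Complex.exp (-w * ((t : ℂ) - s))‖ ≤
          Real.exp (a * s + -(a * t)) := by
        have : ((t : ℂ) - s) = ((t - s : ℝ) : ℂ) := by push_cast; ring
        rw [this]
        calc ‖Complex.exp (-w * ((t - s : ℝ) : ℂ))‖
            ≤ Real.exp (-(a * (t - s))) := habs _ (by linarith)
          _ = Real.exp (a * s + -(a * t)) := by ring_nf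
      have e2 : ‖Complex.exp (-w * ((T : ℂ) - t + s))‖ ≤
          Real.exp (-(a * s) + (a * t - a * T)) := by
        have : ((T : ℂ) - t + s) = ((T - t + s : ℝ) : ℂ) := by push_cast; ring
        rw [this]
        calc ‖Complex.exp (-w * ((T - t + s : ℝ) : ℂ))‖
            ≤ Real.exp (-(a * (T - t + s))) := habs _ (by linarith)
          _ = Real.exp (-(a * s) + (a * t - a * T)) := by ring_nf
      calc ‖Complex.exp (-w * ((t : ℂ) - s)) -
              Complex.exp (-w * ((T : ℂ) - t + s))‖
          ≤ ‖Complex.exp (-w * ((t : ℂ) - s))‖ +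
              ‖Complex.exp (-w * ((T : ℂ) - t + s))‖ := by
            exact norm_sub_le _ _
        _ ≤ _ := add_le_add e1 e2
    calc (∫ s in (0:ℝ)..t, ‖K T w t s‖)
        ≤ ∫ s in (0:ℝ)..t,
            (Real.exp (a * s + -(a * t)) + Real.exp (-(a * s) + (a * t - a * T)))
              / (2 * ‖w‖ * c₀) := by
          apply intervalIntegral.integral_mono_on ht0 (hInt 0 t)
            (by apply Continuous.intervalIntegrable; fun_prop) hmono
      _ = ((∫ s in (0:ℝ)..t, Real.exp (a * s + -(a * t))) +
            (∫ s in (0:ℝ)..t, Real.exp (-(a * s) + (a * t - a * T))))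
              / (2 * ‖w‖ * c₀) := by
          rw [← intervalIntegral.integral_add (by apply Continuous.intervalIntegrable; fun_prop)
            (by apply Continuous.intervalIntegrable; fun_prop)]
          simp [div_eq_mul_inv, intervalIntegral.integral_mul_const]
      _ ≤ (1 / a + 1 / a) / (2 * ‖w‖ * c₀) := by
          gcongr
          · exact exp_int_le a (-(a * t)) 0 t ha ht0 (by linarith)
          · exact exp_int_le' a (a * t - a * T) 0 t ha ht0
              (by simp; nlinarith)
  -- bound on [t, T]
  have bound2 : (∫ s in t..T, ‖K T w t s‖) ≤
      (1 / a + 1 / a) / (2 * ‖w‖ * c₀) := by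
    have hmono : ∀ s ∈ Set.Icc t T, ‖K T w t s‖ ≤
        (Real.exp (-(a * s) + a * t) + Real.exp (a * s + (-(a * T) - a * t)))
          / (2 * ‖w‖ * c₀) := by
      intro s hs
      obtain ⟨hts, hsT⟩ := hs
      rcases eq_or_lt_of_le hts with heq | hlt
      · -- s = t : use first branch value
        subst heq
        rw [K, if_pos le_rfl, norm_div]
        apply div_le_div₀ (by positivity) _ hdenpos hden
        have e1 : ‖Complex.exp (-w * ((t : ℂ) - t))‖ ≤
            Real.exp (-(a * t) + a * t) := by
          have : ((t : ℂ) - t) = ((0 : ℝ) : ℂ) := by push_cast; ring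
          rw [this]
          calc ‖Complex.exp (-w * ((0 : ℝ) : ℂ))‖
              ≤ Real.exp (-(a * 0)) := habs _ le_rfl
            _ = Real.exp (-(a * t) + a * t) := by ring_nf
        have e2 : ‖Complex.exp (-w * ((T : ℂ) - t + t))‖ ≤
            Real.exp (a * t + (-(a * T) - a * t)) := by
          have : ((T : ℂ) - t + t) = ((T : ℝ) : ℂ) := by push_cast; ring
          rw [this]
          calc ‖Complex.exp (-w * ((T : ℝ) : ℂ))‖
              ≤ Real.exp (-(a * T)) := habs _ (by linarith)
            _ = Real.exp (a * t + (-(a * T) - a * t)) := by ring_nf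
        calc ‖Complex.exp (-w * ((t : ℂ) - t)) -
                Complex.exp (-w * ((T : ℂ) - t + t))‖
            ≤ ‖Complex.exp (-w * ((t : ℂ) - t))‖ +
                ‖Complex.exp (-w * ((T : ℂ) - t + t))‖ :=
              norm_sub_le _ _
          _ ≤ _ := add_le_add e1 e2
      · rw [K, if_neg (not_le.2 hlt), norm_div]
        apply div_le_div₀ (by positivity) _ hdenpos hden
        have e1 : ‖Complex.exp (-w * ((s : ℂ) - t))‖ ≤
            Real.exp (-(a * s) + a * t) := by
          have : ((s : ℂ) - t) = ((s - t : ℝ) : ℂ) := by push_cast; ring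
          rw [this]
          calc ‖Complex.exp (-w * ((s - t : ℝ) : ℂ))‖
              ≤ Real.exp (-(a * (s - t))) := habs _ (by linarith)
            _ = Real.exp (-(a * s) + a * t) := by ring_nf
        have e2 : ‖Complex.exp (-w * ((T : ℂ) + t - s))‖ ≤
            Real.exp (a * s + (-(a * T) - a * t)) := by
          have : ((T : ℂ) + t - s) = ((T + t - s : ℝ) : ℂ) := by push_cast; ring
          rw [this]
          calc ‖Complex.exp (-w * ((T + t - s : ℝ) : ℂ))‖
              ≤ Real.exp (-(a * (T + t - s))) := habs _ (by linarith)
            _ = Real.exp (a * s + (-(a * T) - a * t)) := by ring_nf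
        calc ‖Complex.exp (-w * ((s : ℂ) - t)) -
                Complex.exp (-w * ((T : ℂ) + t - s))‖
            ≤ ‖Complex.exp (-w * ((s : ℂ) - t))‖ +
                ‖Complex.exp (-w * ((T : ℂ) + t - s))‖ :=
              norm_sub_le _ _
          _ ≤ _ := add_le_add e1 e2
    calc (∫ s in t..T, ‖K T w t s‖)
        ≤ ∫ s in t..T,
            (Real.exp (-(a * s) + a * t) + Real.exp (a * s + (-(a * T) - a * t)))
              / (2 * ‖w‖ * c₀) := by
          apply intervalIntegral.integral_mono_on htT (hInt t T)
            (by apply Continuous.intervalIntegrable; fun_prop) hmono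
      _ = ((∫ s in t..T, Real.exp (-(a * s) + a * t)) +
            (∫ s in t..T, Real.exp (a * s + (-(a * T) - a * t))))
              / (2 * ‖w‖ * c₀) := by
          rw [← intervalIntegral.integral_add (by apply Continuous.intervalIntegrable; fun_prop)
            (by apply Continuous.intervalIntegrable; fun_prop)]
          simp [div_eq_mul_inv, intervalIntegral.integral_mul_const]
      _ ≤ (1 / a + 1 / a) / (2 * ‖w‖ * c₀) := by
          gcongr
          · exact exp_int_le' a (a * t) t T ha htT (by linarith)
          · exact exp_int_le a (-(a * T) - a * t) t T ha htT (by nlinarith)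
  -- combine
  have hsplit : (∫ s in (0:ℝ)..T, ‖K T w t s‖) =
      (∫ s in (0:ℝ)..t, ‖K T w t s‖) +
      (∫ s in t..T, ‖K T w t s‖) :=
    (intervalIntegral.integral_add_adjacent_intervals (hInt 0 t) (hInt t T)).symm
  rw [hsplit]
  have hfinal : (1 / a + 1 / a) / (2 * ‖w‖ * c₀) +
      (1 / a + 1 / a) / (2 * ‖w‖ * c₀) = 2 / (δ * c₀) / (‖w‖) ^ 2 := by
    rw [ha_def]
    field_simp
    ring
  linarith [bound1, bound2, hfinal.le, hfinal]
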